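/- Let Y, D, W, ε ∈ ℝ^n, Z ∈ ℝ^{n×p}, α ∈ ℝ^p, β, γ ∈ ℝ satisfy Y = Dβ + Zα + Wγ + ε. Set M = [Z D] with linearly independent columns, Ŵ = P_M W ≠ 0, D̃ = P_{Ŵ⊥} D ≠ 0, and Z̃ = P_{Ŵ⊥} Z. Then D̃^⊺(Y − Z̃α) = β‖D̃‖₂² + D̃^⊺ε; equivalently, substituting the true coefficient vector α into the second-step formula yields D̃^⊺(Y − Z̃α)/‖D̃‖₂² = β + D̃^⊺ε/‖D̃‖₂². -/

import Mathlib

open Matrix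

/-- Orthogonal projection matrix onto the column space of `B`:  `P_B = B (Bᵀ B)⁻¹ Bᵀ`. -/
noncomputable def proj {n : ℕ} {ι : Type*} [Fintype ι] [DecidableEq ι]
    (B : Matrix (Fin n) ι ℝ) : Matrix (Fin n) (Fin n) ℝ :=
  B * (B.transpose * B)⁻¹ * B.transpose

/-- Orthogonal projection onto the span of a single vector `w`: `P_w = w wᵀ / (wᵀ w)`. -/
noncomputable def projVec {n : ℕ} (w : Fin n → ℝ) : Matrix (Fin n) (Fin n) ℝ :=
  (w ⬝ᵥ w)⁻¹ • Matrix.vecMulVec w w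

/-- Residual projection matrix `P_{B⊥} = I - P_B`. -/
noncomputable def projPerp {n : ℕ} {ι : Type*} [Fintype ι] [DecidableEq ι]
    (B : Matrix (Fin n) ι ℝ) : Matrix (Fin n) (Fin n) ℝ :=
  1 - proj B

/-- Residual projection onto the orthocomplement of a single vector `w`. -/
noncomputable def projVecPerp {n : ℕ} (w : Fin n → ℝ) : Matrix (Fin n) (Fin n) ℝ :=
  1 - projVec w

lemma projVec_mulVec {n : ℕ} (w v : Fin n → ℝ) :
    projVec w *ᵥ v = ((w ⬝ᵥ w)⁻¹ * (w ⬝ᵥ v)) • w := by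
  have h : vecMulVec w w *ᵥ v = (w ⬝ᵥ v) • w := by
    ext i
    simp only [vecMulVec, mulVec, dotProduct, Pi.smul_apply, smul_eq_mul, of_apply,
      Finset.sum_mul, Finset.mul_sum]
    exact Finset.sum_congr rfl fun j _ => by ring
  rw [projVec, smul_mulVec, h, smul_smul]

lemma mulVec_dotProduct' {m n : ℕ} (A : Matrix (Fin m) (Fin n) ℝ) (u : Fin n → ℝ)
    (v : Fin m → ℝ) : (A *ᵥ u) ⬝ᵥ v = u ⬝ᵥ (Aᵀ *ᵥ v) := by
  rw [dotProduct_mulVec, vecMul_transpose]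

/-- **The second-step formula recovers the causal effect at the true coefficients.**
In the model `Y = Dβ + Zα + Wγ + ε` with `M = [Z D]` of full column rank,
`Ŵ = P_M W ≠ 0`, `D̃ = P_{Ŵ⊥} D ≠ 0` and `Z̃ = P_{Ŵ⊥} Z`, one has
`D̃ᵀ(Y - Z̃ α) = β ‖D̃‖₂² + D̃ᵀ ε`; equivalently
`D̃ᵀ(Y - Z̃ α)/‖D̃‖₂² = β + D̃ᵀε/‖D̃‖₂²`. -/
theorem second_step_recovers_beta
    {n p : ℕ} (Y D W ε : Fin n → ℝ) (Z : Matrix (Fin n) (Fin p) ℝ)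
    (α : Fin p → ℝ) (β γ : ℝ)
    (hmodel : Y = β • D + Z *ᵥ α + γ • W + ε)
    (M : Matrix (Fin n) (Fin (p + 1)) ℝ)
    (hM : M = Matrix.of fun i j => Fin.lastCases (D i) (fun k => Z i k) j)
    (hMrank : LinearIndependent ℝ M.transpose)
    (What : Fin n → ℝ) (hWhat : What = proj M *ᵥ W) (hWne : What ≠ 0)
    (Dtil : Fin n → ℝ) (hDtil : Dtil = projVecPerp What *ᵥ D) (hDne : Dtil ≠ 0)
    (Ztil : Matrix (Fin n) (Fin p) ℝ) (hZtil : Ztil = projVecPerp What * Z) :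
    Dtil ⬝ᵥ (Y - Ztil *ᵥ α) = β * (Dtil ⬝ᵥ Dtil) + Dtil ⬝ᵥ ε ∧
      (Dtil ⬝ᵥ (Y - Ztil *ᵥ α)) / (Dtil ⬝ᵥ Dtil) =
        β + (Dtil ⬝ᵥ ε) / (Dtil ⬝ᵥ Dtil) := by
  have hWW : What ⬝ᵥ What ≠ 0 := fun h => hWne (dotProduct_self_eq_zero.mp h)
  have hDDne : Dtil ⬝ᵥ Dtil ≠ 0 := fun h => hDne (dotProduct_self_eq_zero.mp h)
  -- injectivity of `M.mulVec` from linear independence of columns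
  have hMinj : Function.Injective M.mulVec := by
    have h := (Matrix.vecMul_injective_iff (M := M.transpose)).mpr hMrank
    intro x y hxy
    apply h
    show x ᵥ* Mᵀ = y ᵥ* Mᵀ
    rwa [vecMul_transpose, vecMul_transpose]
  -- `MᵀM` is a unit
  have hAunit : IsUnit (Mᵀ * M) := by
    rw [← Matrix.mulVec_injective_iff_isUnit]
    intro x y hxy
    apply hMinj
    have h0 : (Mᵀ * M) *ᵥ (x - y) = 0 := by
      rw [mulVec_sub, hxy, sub_self]
    have h1 : (M *ᵥ (x - y)) ⬝ᵥ (M *ᵥ (x - y)) = 0 := by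
      rw [mulVec_dotProduct', mulVec_mulVec, h0, dotProduct_zero]
    have h2 : M *ᵥ (x - y) = 0 := dotProduct_self_eq_zero.mp h1
    rw [mulVec_sub, sub_eq_zero] at h2
    exact h2
  have hinv : (Mᵀ * M) * (Mᵀ * M)⁻¹ = 1 :=
    mul_nonsing_inv _ ((isUnit_iff_isUnit_det _).mp hAunit)
  have hMtP : Mᵀ * proj M = Mᵀ := by
    unfold proj
    calc Mᵀ * (M * (Mᵀ * M)⁻¹ * Mᵀ) = (Mᵀ * M) * (Mᵀ * M)⁻¹ * Mᵀ := by
          simp only [Matrix.mul_assoc]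
      _ = Mᵀ := by rw [hinv, Matrix.one_mul]
  have hres : Mᵀ *ᵥ (W - What) = 0 := by
    rw [hWhat, mulVec_sub, mulVec_mulVec, hMtP, sub_self]
  have horth : ∀ u : Fin (p + 1) → ℝ, (M *ᵥ u) ⬝ᵥ (W - What) = 0 := by
    intro u
    rw [mulVec_dotProduct', hres, dotProduct_zero]
  -- D is a column of M
  have hDcol : D = M *ᵥ Pi.single (Fin.last p) 1 := by
    ext i
    rw [mulVec, dotProduct_single, mul_one, hM]
    simp [Fin.lastCases_last]
  have hWcol : What = M *ᵥ ((Mᵀ * M)⁻¹ *ᵥ (Mᵀ *ᵥ W)) := by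
    rw [hWhat, proj, ← mulVec_mulVec, ← mulVec_mulVec]
  have hDWres : D ⬝ᵥ (W - What) = 0 := by rw [hDcol]; exact horth _
  have hWhWres : What ⬝ᵥ (W - What) = 0 := by
    have h := horth ((Mᵀ * M)⁻¹ *ᵥ (Mᵀ *ᵥ W))
    rwa [← hWcol] at h
  -- explicit form of Dtil
  set c : ℝ := (What ⬝ᵥ What)⁻¹ * (What ⬝ᵥ D) with hc
  have hDtil' : Dtil = D - c • What := by
    rw [hDtil, projVecPerp, sub_mulVec, one_mulVec, projVec_mulVec]
  have hDtW : Dtil ⬝ᵥ What = 0 := by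
    rw [hDtil', sub_dotProduct, smul_dotProduct, smul_eq_mul, hc,
      dotProduct_comm D What]
    field_simp
    simp
  have hDtP : ∀ v : Fin n → ℝ, Dtil ⬝ᵥ (projVec What *ᵥ v) = 0 := by
    intro v
    rw [projVec_mulVec, dotProduct_smul, smul_eq_mul, hDtW, mul_zero]
  have hDD : Dtil ⬝ᵥ D = Dtil ⬝ᵥ Dtil := by
    have h := dotProduct_sub Dtil D (c • What)
    rw [← hDtil', dotProduct_smul, smul_eq_mul, hDtW, mul_zero, sub_zero] at h
    exact h.symm
  have hDtWvec : Dtil ⬝ᵥ W = 0 := by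
    have h1 : Dtil ⬝ᵥ (W - What) = 0 := by
      rw [hDtil', sub_dotProduct, smul_dotProduct, smul_eq_mul, hDWres, hWhWres,
        mul_zero, sub_self]
    have h2 := dotProduct_sub Dtil W What
    rw [h1] at h2
    have h3 : Dtil ⬝ᵥ W = Dtil ⬝ᵥ What := (sub_eq_zero.mp h2.symm)
    rw [h3, hDtW]
  have hZdiff : Z *ᵥ α - Ztil *ᵥ α = projVec What *ᵥ (Z *ᵥ α) := by
    rw [hZtil, ← mulVec_mulVec, projVecPerp, sub_mulVec, one_mulVec, sub_sub_cancel]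
  have key : Dtil ⬝ᵥ (Y - Ztil *ᵥ α) = β * (Dtil ⬝ᵥ Dtil) + Dtil ⬝ᵥ ε := by
    have hY : Y - Ztil *ᵥ α = β • D + projVec What *ᵥ (Z *ᵥ α) + γ • W + ε := by
      rw [hmodel, ← hZdiff]; abel
    rw [hY, dotProduct_add, dotProduct_add, dotProduct_add, dotProduct_smul,
      dotProduct_smul, hDtP, hDtWvec, hDD, smul_eq_mul, smul_eq_mul, mul_zero,
      add_zero, add_zero]
  refine ⟨key, ?_⟩
  rw [key, add_div, mul_div_assoc, div_self hDDne, mul_one]
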